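/- arXiv:1710.03530 — 3 statements merged into one kernel-verified Lean document; each statement's English description precedes it below -/
import Mathlib

section
/- For any matrices A, B and any vector x, A⋉(B⋉x) = (A⋉B)⋉x, where on the left and with x the vector product A⋉x := (A⊗I_{t/n})(x⊗1_{t/r}) is used (A ∈ M_{m×n}, x ∈ R^r, t = lcm(n,r), 1_k the all-ones column vector), and A⋉B is the semi-tensor product of matrices. -/
open Matrix Kronecker

noncomputable section

/-- `A ⊗ I_s`, reindexed to `Fin (m*s) × Fin (n*s)` index types. -/
def mkron {m n : ℕ} (A : Matrix (Fin m) (Fin n) ℝ) (s : ℕ) :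
    Matrix (Fin (m * s)) (Fin (n * s)) ℝ :=
  Matrix.reindex finProdFinEquiv finProdFinEquiv
    (Matrix.kroneckerMap (· * ·) A (1 : Matrix (Fin s) (Fin s) ℝ))

/-- `x ⊗ 1_s`: each entry of `x` repeated `s` times (Kronecker with the all-ones vector). -/
def vkron {r : ℕ} (x : Fin r → ℝ) (s : ℕ) : Fin (r * s) → ℝ :=
  fun i => x (finProdFinEquiv.symm i).1

/-- The semi-tensor (M-) product `A ⋉ B = (A ⊗ I_{t/n})(B ⊗ I_{t/p})`, `t = lcm n p`. -/
def stp {m n p q : ℕ} (A : Matrix (Fin m) (Fin n) ℝ) (B : Matrix (Fin p) (Fin q) ℝ) :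
    Matrix (Fin (m * (Nat.lcm n p / n))) (Fin (q * (Nat.lcm n p / p))) ℝ :=
  mkron A (Nat.lcm n p / n) *
    (mkron B (Nat.lcm n p / p)).submatrix
      (Fin.cast (by
        rw [Nat.mul_div_cancel' (Nat.dvd_lcm_left n p),
          Nat.mul_div_cancel' (Nat.dvd_lcm_right n p)])) id

/-- The vector (V-) product `A ⋉_V x = (A ⊗ I_{t/n})(x ⊗ 1_{t/r})`, `t = lcm n r`. -/
def vprod {m n r : ℕ} (A : Matrix (Fin m) (Fin n) ℝ) (x : Fin r → ℝ) :
    Fin (m * (Nat.lcm n r / n)) → ℝ :=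
  (mkron A (Nat.lcm n r / n)).mulVec fun j =>
    vkron x (Nat.lcm n r / r)
      (Fin.cast (by
        rw [Nat.mul_div_cancel' (Nat.dvd_lcm_left n r),
          Nat.mul_div_cancel' (Nat.dvd_lcm_right n r)]) j)

/-- V-addition `x ⊞ y = (x ⊗ 1_{t/m}) + (y ⊗ 1_{t/n})`, `t = lcm m n`. -/
def vadd2 {m n : ℕ} (x : Fin m → ℝ) (y : Fin n → ℝ) : Fin (Nat.lcm m n) → ℝ :=
  fun i =>
    vkron x (Nat.lcm m n / m) (Fin.cast (Nat.mul_div_cancel' (Nat.dvd_lcm_left m n)).symm i) +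
    vkron y (Nat.lcm m n / n) (Fin.cast (Nat.mul_div_cancel' (Nat.dvd_lcm_right m n)).symm i)

/-- V-subtraction `x ⊟ y = (x ⊗ 1_{t/m}) - (y ⊗ 1_{t/n})`, `t = lcm m n`. -/
def vsub2 {m n : ℕ} (x : Fin m → ℝ) (y : Fin n → ℝ) : Fin (Nat.lcm m n) → ℝ :=
  fun i =>
    vkron x (Nat.lcm m n / m) (Fin.cast (Nat.mul_div_cancel' (Nat.dvd_lcm_left m n)).symm i) -
    vkron y (Nat.lcm m n / n) (Fin.cast (Nat.mul_div_cancel' (Nat.dvd_lcm_right m n)).symm i)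

/-- The dimension-normalized norm `‖x‖_V = sqrt((1/k) ∑ xᵢ²)`. -/
def vnorm {k : ℕ} (x : Fin k → ℝ) : ℝ :=
  Real.sqrt ((∑ i, x i ^ 2) / k)

/-- The dimension-free inner product `⟨x,y⟩_V = (1/t)⟨x⊗1_{t/m}, y⊗1_{t/n}⟩`. -/
def vinner {m n : ℕ} (x : Fin m → ℝ) (y : Fin n → ℝ) : ℝ :=
  (∑ i : Fin (Nat.lcm m n),
      vkron x (Nat.lcm m n / m) (Fin.cast (Nat.mul_div_cancel' (Nat.dvd_lcm_left m n)).symm i) *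
      vkron y (Nat.lcm m n / n)
        (Fin.cast (Nat.mul_div_cancel' (Nat.dvd_lcm_right m n)).symm i)) /
    (Nat.lcm m n)

/-- The dimension-free distance `d(x,y) = ‖x ⊟ y‖_V`. -/
def vdist {m n : ℕ} (x : Fin m → ℝ) (y : Fin n → ℝ) : ℝ := vnorm (vsub2 x y)

/-- The spectral norm `‖A‖ = sqrt(σ_max(AᵀA))` (largest eigenvalue of `AᵀA = AᴴA` over `ℝ`). -/
def specNorm {m n : ℕ} (A : Matrix (Fin m) (Fin n) ℝ) : ℝ :=
  Real.sqrt (⨆ i, (show (Aᵀ * A).IsHermitian by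
    simpa using Matrix.isHermitian_conjTranspose_mul_self A).eigenvalues i)

/-- Vector equivalence: `x ↔ y` iff `x ⊗ 1_α = y ⊗ 1_β` for some `α, β ≥ 1`. -/
def VEquiv {m n : ℕ} (x : Fin m → ℝ) (y : Fin n → ℝ) : Prop :=
  ∃ (α β : ℕ), 0 < α ∧ 0 < β ∧
    ∃ h : m * α = n * β, ∀ i, vkron x α i = vkron y β (Fin.cast h i)

/-- Matrix equivalence: `A ∼ B` iff `A ⊗ I_α = B ⊗ I_β` for some `α, β ≥ 1`. -/
def MEquiv {m n p q : ℕ} (A : Matrix (Fin m) (Fin n) ℝ) (B : Matrix (Fin p) (Fin q) ℝ) : Prop :=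
  ∃ (α β : ℕ), 0 < α ∧ 0 < β ∧
    ∃ (h1 : m * α = p * β) (h2 : n * α = q * β),
      ∀ i j, mkron A α i j = mkron B β (Fin.cast h1 i) (Fin.cast h2 j)

/-- `R^r` is `A`-invariant: `A ⋉_V x ∈ R^r` for every `x ∈ R^r`. -/
def AInvariant {m n : ℕ} (A : Matrix (Fin m) (Fin n) ℝ) (r : ℕ) : Prop :=
  ∀ x : Fin r → ℝ, ∃ y : Fin r → ℝ,
    (⟨_, vprod A x⟩ : Σ k : ℕ, Fin k → ℝ) = ⟨r, y⟩

lemma div_lt_of_lt_mul' {i m s : ℕ} (h : i < m * s) : i / s < m :=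
  Nat.div_lt_of_lt_mul (by rwa [mul_comm])

lemma spos {m s : ℕ} (i : Fin (m*s)) : 0 < s := by
  have h := Nat.lt_of_le_of_lt (Nat.zero_le _) i.isLt
  exact Nat.pos_of_ne_zero fun hs => by simp [hs] at h

lemma mkron_apply {m n : ℕ} (A : Matrix (Fin m) (Fin n) ℝ) (s : ℕ)
    (i : Fin (m*s)) (j : Fin (n*s)) :
    mkron A s i j = if (i : ℕ) % s = (j : ℕ) % s then
      A ⟨(i:ℕ)/s, div_lt_of_lt_mul' i.isLt⟩ ⟨(j:ℕ)/s, div_lt_of_lt_mul' j.isLt⟩ else 0 := by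
  simp [mkron, Matrix.one_apply, Fin.divNat, Fin.modNat, Matrix.kroneckerMap,
    Fin.ext_iff, mul_ite, mul_one, mul_zero]

lemma vkron_apply {r : ℕ} (x : Fin r → ℝ) (s : ℕ) (i : Fin (r*s)) :
    vkron x s i = x ⟨(i:ℕ)/s, div_lt_of_lt_mul' i.isLt⟩ := by
  simp [vkron, Fin.divNat]

-- L2
lemma vkron_vkron {r : ℕ} (x : Fin r → ℝ) (u u' : ℕ) (i : Fin (r*u*u')) :
    vkron (vkron x u) u' i = vkron x (u*u') (Fin.cast (mul_assoc r u u') i) := by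
  simp only [vkron_apply, Fin.coe_cast]
  congr 1
  simp [Fin.ext_iff, Nat.div_div_eq_div_mul, mul_comm u u']

-- L1
lemma mkron_mkron {m n : ℕ} (A : Matrix (Fin m) (Fin n) ℝ) (s s' : ℕ)
    (i : Fin (m*s*s')) (j : Fin (n*s*s')) :
    mkron (mkron A s) s' i j
      = mkron A (s*s') (Fin.cast (mul_assoc m s s') i) (Fin.cast (mul_assoc n s s') j) := by
  have hs' : 0 < s' := spos i
  simp only [mkron_apply, Fin.coe_cast]
  have hdi : (i:ℕ)/s'/s = (i:ℕ)/(s*s') := by rw [Nat.div_div_eq_div_mul, mul_comm s s']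
  have hdj : (j:ℕ)/s'/s = (j:ℕ)/(s*s') := by rw [Nat.div_div_eq_div_mul, mul_comm s s']
  have hmi : (i:ℕ) % (s*s') = (i:ℕ) % s' + s' * ((i:ℕ)/s' % s) := by
    rw [mul_comm s s']; exact Nat.mod_mul
  have hmj : (j:ℕ) % (s*s') = (j:ℕ) % s' + s' * ((j:ℕ)/s' % s) := by
    rw [mul_comm s s']; exact Nat.mod_mul
  have hbi : (i:ℕ) % s' < s' := Nat.mod_lt _ hs'
  have hbj : (j:ℕ) % s' < s' := Nat.mod_lt _ hs'
  split_ifs with h1 h2 h3 h3 h4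
  · congr 1 <;> simp [Fin.ext_iff, hdi, hdj]
  · exact absurd (by rw [hmi, hmj, h1, h2]) h3
  · exfalso
    rw [hmi, hmj, h1] at h3
    exact h2 (Nat.eq_of_mul_eq_mul_left hs' (by omega))
  · rfl
  · exfalso
    rw [hmi, hmj] at h4
    have := congrArg (· % s') h4
    simp only [Nat.add_mul_mod_self_left] at this
    rw [Nat.mod_eq_of_lt hbi, Nat.mod_eq_of_lt hbj] at this
    exact h1 this
  · rfl

lemma vkron_mulVec {p' q' : ℕ} (M : Matrix (Fin p') (Fin q') ℝ) (v : Fin q' → ℝ)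
    (b : ℕ) (i : Fin (p'*b)) :
    vkron (M.mulVec v) b i = (mkron M b).mulVec (vkron v b) i := by
  have hb : 0 < b := spos i
  rw [vkron_apply]
  rw [Matrix.mulVec, Matrix.mulVec, dotProduct, dotProduct]
  rw [← Equiv.sum_comp (finProdFinEquiv : Fin q' × Fin b ≃ Fin (q'*b))]
  rw [Fintype.sum_prod_type]
  have key : ∀ (c : Fin q') (t : Fin b),
      mkron M b i (finProdFinEquiv (c, t)) * vkron v b (finProdFinEquiv (c, t))
      = (if ((⟨(i:ℕ) % b, Nat.mod_lt _ hb⟩ : Fin b) = t) then M ⟨(i:ℕ)/b, div_lt_of_lt_mul' i.isLt⟩ c * v c else 0) := by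
    intro c t
    rw [mkron_apply, vkron_apply]
    have hval : ((finProdFinEquiv (c, t) : Fin (q'*b)) : ℕ) = (t:ℕ) + b * (c:ℕ) := rfl
    have h1 : ((finProdFinEquiv (c, t) : Fin (q'*b)) : ℕ) % b = (t:ℕ) := by
      rw [hval, Nat.add_mul_mod_self_left, Nat.mod_eq_of_lt t.isLt]
    have h2 : ((finProdFinEquiv (c, t) : Fin (q'*b)) : ℕ) / b = (c:ℕ) := by
      rw [hval, Nat.add_mul_div_left _ _ hb, Nat.div_eq_of_lt t.isLt, Nat.zero_add]
    simp only [h1, h2, Fin.ext_iff]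
    split_ifs with h
    · congr 1
    · simp
  simp only [key]
  simp [Finset.sum_ite_eq]

lemma mkron_mul {m' n' q' : ℕ} (M : Matrix (Fin m') (Fin n') ℝ)
    (N : Matrix (Fin n') (Fin q') ℝ) (e : ℕ) (i : Fin (m'*e)) (j : Fin (q'*e)) :
    mkron (M * N) e i j = (mkron M e * mkron N e : Matrix _ _ ℝ) i j := by
  have he : 0 < e := spos i
  rw [mkron_apply, Matrix.mul_apply, Matrix.mul_apply]
  rw [← Equiv.sum_comp (finProdFinEquiv : Fin n' × Fin e ≃ Fin (n'*e))]
  rw [Fintype.sum_prod_type]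
  have key : ∀ (c : Fin n') (t : Fin e),
      mkron M e i (finProdFinEquiv (c, t)) * mkron N e (finProdFinEquiv (c, t)) j
      = (if ((⟨(i:ℕ) % e, Nat.mod_lt _ he⟩ : Fin e) = t) then
          (if (i:ℕ) % e = (j:ℕ) % e then
            M ⟨(i:ℕ)/e, div_lt_of_lt_mul' i.isLt⟩ c * N c ⟨(j:ℕ)/e, div_lt_of_lt_mul' j.isLt⟩
           else 0) else 0) := by
    intro c t
    rw [mkron_apply, mkron_apply]
    have hval : ((finProdFinEquiv (c, t) : Fin (n'*e)) : ℕ) = (t:ℕ) + e * (c:ℕ) := rfl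
    have h1 : ((finProdFinEquiv (c, t) : Fin (n'*e)) : ℕ) % e = (t:ℕ) := by
      rw [hval, Nat.add_mul_mod_self_left, Nat.mod_eq_of_lt t.isLt]
    have h2 : ((finProdFinEquiv (c, t) : Fin (n'*e)) : ℕ) / e = (c:ℕ) := by
      rw [hval, Nat.add_mul_div_left _ _ he, Nat.div_eq_of_lt t.isLt, Nat.zero_add]
    simp only [h1, h2, Fin.ext_iff]
    split_ifs with ha hb hc <;> try simp
    · omega
    · omega
  simp only [key]
  rw [Finset.sum_comm]
  simp [Finset.sum_ite_eq, Matrix.mul_apply, Finset.mul_sum]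

lemma mkron_mul_cstar {m' n' q' : ℕ} (M : Matrix (Fin m') (Fin n') ℝ)
    (N : Matrix (Fin n') (Fin q') ℝ) (e : ℕ) (i : Fin (m'*e)) (j : Fin (q'*e)) :
    mkron (@HMul.hMul (Matrix (Fin m') (Fin n') ℝ) (Matrix (Fin n') (Fin q') ℝ)
      (Matrix (Fin m') (Fin q') ℝ) CStarMatrix.instHMulOfFintypeOfMulOfAddCommMonoid M N) e i j
      = (mkron M e * mkron N e : Matrix _ _ ℝ) i j :=
  mkron_mul M N e i j

/-- canonical chain normal form -/
def chain {m n p q r : ℕ} (A : Matrix (Fin m) (Fin n) ℝ) (B : Matrix (Fin p) (Fin q) ℝ)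
    (x : Fin r → ℝ) (α β γ : ℕ) (h1 : n * α = p * β) (h2 : q * β = r * γ) :
    Fin (m * α) → ℝ :=
  (mkron A α).mulVec fun j =>
    ((mkron B β).mulVec fun k => vkron x γ (Fin.cast h2 k)) (Fin.cast h1 j)

lemma chain_congr {m n p q r : ℕ} (A : Matrix (Fin m) (Fin n) ℝ) (B : Matrix (Fin p) (Fin q) ℝ)
    (x : Fin r → ℝ) {α β γ α' β' γ' : ℕ}
    (hα : α = α') (hβ : β = β') (hγ : γ = γ')
    (h1 : n * α = p * β) (h2 : q * β = r * γ) (h1' : n * α' = p * β') (h2' : q * β' = r * γ') :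
    (⟨m * α, chain A B x α β γ h1 h2⟩ : Σ k : ℕ, Fin k → ℝ)
      = ⟨m * α', chain A B x α' β' γ' h1' h2'⟩ := by
  subst hα hβ hγ; rfl

lemma stepA {m n p q r : ℕ} (hn : 0 < n) (hp : 0 < p) (hq : 0 < q) (hr : 0 < r)
    (A : Matrix (Fin m) (Fin n) ℝ) (B : Matrix (Fin p) (Fin q) ℝ) (x : Fin r → ℝ)
    (h1 : n * (Nat.lcm n (p * (Nat.lcm q r / q)) / n)
        = p * (Nat.lcm q r / q * (Nat.lcm n (p * (Nat.lcm q r / q)) / (p * (Nat.lcm q r / q)))))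
    (h2 : q * (Nat.lcm q r / q * (Nat.lcm n (p * (Nat.lcm q r / q)) / (p * (Nat.lcm q r / q))))
        = r * (Nat.lcm q r / r * (Nat.lcm n (p * (Nat.lcm q r / q)) / (p * (Nat.lcm q r / q))))) :
    vprod A (vprod B x)
      = chain A B x (Nat.lcm n (p * (Nat.lcm q r / q)) / n)
          (Nat.lcm q r / q * (Nat.lcm n (p * (Nat.lcm q r / q)) / (p * (Nat.lcm q r / q))))
          (Nat.lcm q r / r * (Nat.lcm n (p * (Nat.lcm q r / q)) / (p * (Nat.lcm q r / q))))
          h1 h2 := by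
  set l1 := Nat.lcm q r / q with hl1
  set k1 := Nat.lcm q r / r with hk1
  set a := Nat.lcm n (p * l1) / n with ha
  set b := Nat.lcm n (p * l1) / (p * l1) with hb
  unfold chain vprod
  funext i
  rw [Matrix.mulVec, Matrix.mulVec, dotProduct, dotProduct]
  apply Finset.sum_congr rfl
  intro j _
  congr 1
  -- LHS : vkron ((mkron B l1).mulVec v) b (Fin.cast _ j)
  rw [vkron_mulVec]
  rw [Matrix.mulVec, Matrix.mulVec, dotProduct, dotProduct]
  rw [← Equiv.sum_comp (finCongr (mul_assoc q l1 b) : Fin (q*l1*b) ≃ Fin (q*(l1*b)))]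
  congr 1
  funext k
  rw [mkron_mkron, vkron_apply, vkron_apply, vkron_apply]
  congr 1
  congr 1
  apply Fin.ext
  show (k:ℕ) / b / k1 = ((finCongr (mul_assoc q l1 b) k : Fin (q*(l1*b))):ℕ) / (k1 * b)
  rw [Nat.div_div_eq_div_mul, mul_comm b k1]
  rfl

lemma mkron_submatrix {p1 p2 q1 : ℕ} (M : Matrix (Fin p2) (Fin q1) ℝ) (h : p1 = p2) (e : ℕ)
    (i : Fin (p1*e)) (j : Fin (q1*e)) :
    mkron (M.submatrix (Fin.cast h) id) e i j
      = mkron M e (Fin.cast (by rw [h]) i) j := by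
  subst h; rfl

lemma stepB {m n p q r : ℕ}
    (A : Matrix (Fin m) (Fin n) ℝ) (B : Matrix (Fin p) (Fin q) ℝ) (x : Fin r → ℝ)
    (h1 : n * (Nat.lcm n p / n * (Nat.lcm (q * (Nat.lcm n p / p)) r / (q * (Nat.lcm n p / p))))
        = p * (Nat.lcm n p / p * (Nat.lcm (q * (Nat.lcm n p / p)) r / (q * (Nat.lcm n p / p)))))
    (h2 : q * (Nat.lcm n p / p * (Nat.lcm (q * (Nat.lcm n p / p)) r / (q * (Nat.lcm n p / p))))
        = r * (Nat.lcm (q * (Nat.lcm n p / p)) r / r))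
    (i : Fin (m * (Nat.lcm n p / n) * (Nat.lcm (q * (Nat.lcm n p / p)) r / (q * (Nat.lcm n p / p))))) :
    vprod (stp A B) x i
      = chain A B x
          (Nat.lcm n p / n * (Nat.lcm (q * (Nat.lcm n p / p)) r / (q * (Nat.lcm n p / p))))
          (Nat.lcm n p / p * (Nat.lcm (q * (Nat.lcm n p / p)) r / (q * (Nat.lcm n p / p))))
          (Nat.lcm (q * (Nat.lcm n p / p)) r / r) h1 h2
          (Fin.cast (mul_assoc m (Nat.lcm n p / n) (Nat.lcm (q * (Nat.lcm n p / p)) r / (q * (Nat.lcm n p / p)))) i) := by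
  set c := Nat.lcm n p / n with hc
  set d := Nat.lcm n p / p with hd
  set e := Nat.lcm (q * d) r / (q * d) with he
  set f := Nat.lcm (q * d) r / r with hf
  unfold vprod chain stp
  simp only [Matrix.mulVec, dotProduct]
  simp only [mkron_mul_cstar, Matrix.mul_apply, mkron_submatrix, mkron_mkron, vkron_apply]
  simp only [Finset.sum_mul]
  rw [Finset.sum_comm]
  refine Fintype.sum_equiv (finCongr (mul_assoc n c e)) _ _ ?_
  intro k
  simp only [mul_assoc]
  rw [← Finset.mul_sum]
  congr 1
  refine Fintype.sum_equiv (finCongr (mul_assoc q d e)) _ _ ?_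
  intro j
  rfl

lemma sigma_cast {k l : ℕ} (h : k = l) (g : Fin l → ℝ) :
    (⟨k, fun i => g (Fin.cast h i)⟩ : Σ k : ℕ, Fin k → ℝ) = ⟨l, g⟩ := by
  subst h; rfl

/-- the V-product is an action of the STP monoid:
`A ⋉_V (B ⋉_V x) = (A ⋉ B) ⋉_V x`. -/
theorem vprod_stp_assoc {m n p q r : ℕ} (hm : 0 < m) (hn : 0 < n) (hp : 0 < p)
    (hq : 0 < q) (hr : 0 < r)
    (A : Matrix (Fin m) (Fin n) ℝ) (B : Matrix (Fin p) (Fin q) ℝ) (x : Fin r → ℝ) :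
    (⟨_, vprod A (vprod B x)⟩ : Σ k : ℕ, Fin k → ℝ) = ⟨_, vprod (stp A B) x⟩ := by
  set l1 := Nat.lcm q r / q with hl1
  set k1 := Nat.lcm q r / r with hk1
  set a := Nat.lcm n (p * l1) / n with ha
  set b := Nat.lcm n (p * l1) / (p * l1) with hb
  set c := Nat.lcm n p / n with hc
  set d := Nat.lcm n p / p with hd
  set e := Nat.lcm (q * d) r / (q * d) with he
  set f := Nat.lcm (q * d) r / r with hf
  -- basic multiplicative facts
  have Fq : q * l1 = Nat.lcm q r := Nat.mul_div_cancel' (Nat.dvd_lcm_left q r)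
  have Fr : r * k1 = Nat.lcm q r := Nat.mul_div_cancel' (Nat.dvd_lcm_right q r)
  have Fn : n * a = Nat.lcm n (p * l1) := Nat.mul_div_cancel' (Nat.dvd_lcm_left _ _)
  have FP : p * l1 * b = Nat.lcm n (p * l1) := Nat.mul_div_cancel' (Nat.dvd_lcm_right _ _)
  have Fc : n * c = Nat.lcm n p := Nat.mul_div_cancel' (Nat.dvd_lcm_left _ _)
  have Fd : p * d = Nat.lcm n p := Nat.mul_div_cancel' (Nat.dvd_lcm_right _ _)
  have Fe : q * d * e = Nat.lcm (q * d) r := Nat.mul_div_cancel' (Nat.dvd_lcm_left _ _)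
  have Ff : r * f = Nat.lcm (q * d) r := Nat.mul_div_cancel' (Nat.dvd_lcm_right _ _)
  have hA1 : n * a = p * (l1 * b) := by rw [Fn, ← FP, mul_assoc]
  have hA2 : q * (l1 * b) = r * (k1 * b) := by
    rw [← mul_assoc, ← mul_assoc, Fq, Fr]
  have hB1 : n * (c * e) = p * (d * e) := by
    rw [← mul_assoc, ← mul_assoc, Fc, Fd]
  have hB2 : q * (d * e) = r * f := by rw [← mul_assoc, Fe, Ff]
  -- the key lcm identity, giving a = c * e
  have e1 : a = c * e := by
    have key : q * (n * a) = q * (n * (c * e)) := by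
      calc q * (n * a) = q * Nat.lcm n (p * l1) := by rw [Fn]
        _ = Nat.lcm (q * n) (q * (p * l1)) := (Nat.lcm_mul_left _ _ _).symm
        _ = Nat.lcm (q * n) (p * (q * l1)) := by ring_nf
        _ = Nat.lcm (q * n) (p * Nat.lcm q r) := by rw [Fq]
        _ = Nat.lcm (q * n) (Nat.lcm (p * q) (p * r)) := by rw [Nat.lcm_mul_left]
        _ = Nat.lcm (Nat.lcm (q * n) (p * q)) (p * r) := (Nat.lcm_assoc _ _ _).symm
        _ = Nat.lcm (Nat.lcm (q * n) (q * p)) (p * r) := by rw [mul_comm p q]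
        _ = Nat.lcm (q * Nat.lcm n p) (p * r) := by rw [Nat.lcm_mul_left]
        _ = Nat.lcm (q * (p * d)) (p * r) := by rw [Fd]
        _ = Nat.lcm (p * (q * d)) (p * r) := by ring_nf
        _ = p * Nat.lcm (q * d) r := by rw [Nat.lcm_mul_left]
        _ = p * (q * d * e) := by rw [Fe]
        _ = q * (n * (c * e)) := by rw [show n * (c * e) = n * c * e by ring, Fc, ← Fd]; ring
    exact Nat.eq_of_mul_eq_mul_left hn (Nat.eq_of_mul_eq_mul_left hq key)
  have e2 : l1 * b = d * e := by
    apply Nat.eq_of_mul_eq_mul_left hp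
    rw [← hA1, e1, hB1]
  have e3 : k1 * b = f := by
    apply Nat.eq_of_mul_eq_mul_left hr
    rw [← hA2, e2, hB2]
  have SA := stepA hn hp hq hr A B x hA1 hA2
  have SB : vprod (stp A B) x
      = fun i => chain A B x (c * e) (d * e) f hB1 hB2 (Fin.cast (mul_assoc m c e) i) :=
    funext (stepB A B x hB1 hB2)
  rw [SA, SB]
  exact (chain_congr A B x e1 e2 e3 hA1 hA2 hB1 hB2).trans
    (sigma_cast (mul_assoc m c e) _).symm
end
end

section
/- Let A ∈ M_{m×n} with m | n (i.e., n = m·μ_x). Then R^r is A-invariant under the V-product (i.e., A⋉_V x ∈ R^r for all x ∈ R^r) if and only if r = lcm(r, m·μ_x)/μ_x. -/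
open Matrix Kronecker

noncomputable section

lemma sigma_mk_eq {a b : ℕ} (h : a = b) (v : Fin a → ℝ) :
    (⟨a, v⟩ : Σ k : ℕ, Fin k → ℝ) = ⟨b, fun i => v (Fin.cast h.symm i)⟩ := by
  subst h; rfl

/-- for `A ∈ M_{m×mμ}`, `R^r` is `A`-invariant under the V-product iff
`r = lcm(r, mμ)/μ`. -/
theorem ainvariant_iff {m μ r : ℕ} (hm : 0 < m) (hμ : 0 < μ) (hr : 0 < r)
    (A : Matrix (Fin m) (Fin (m * μ)) ℝ) :
    AInvariant A r ↔ r = Nat.lcm r (m * μ) / μ := by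
  have key : m * (Nat.lcm (m * μ) r / (m * μ)) = Nat.lcm r (m * μ) / μ := by
    obtain ⟨k, hk⟩ := Nat.dvd_lcm_left (m * μ) r
    rw [Nat.lcm_comm r (m * μ), hk,
      Nat.mul_div_cancel_left k (by positivity),
      show m * μ * k = μ * (m * k) by ring,
      Nat.mul_div_cancel_left _ hμ]
  constructor
  · intro h
    obtain ⟨y, hy⟩ := h 0
    have hfst : m * (Nat.lcm (m * μ) r / (m * μ)) = r := congrArg Sigma.fst hy
    rw [← key, hfst]
  · intro h x
    have hd : m * (Nat.lcm (m * μ) r / (m * μ)) = r := by rw [key, ← h]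
    exact ⟨_, sigma_mk_eq hd (vprod A x)⟩
end
end

section
/- Let A ∈ M_{k×kμ_x} and suppose r satisfies r = lcm(r, kμ_x)/μ_x (so R^r is A-invariant). Then the restriction of the V-product action of A to R^r is given by the square matrix A_r = (A ⊗ I_{r/k})(I_r ⊗ 1_{μ_x}), i.e., A⋉_V x = A_r x for all x ∈ R^r. -/
open Matrix Kronecker

noncomputable section

lemma sigma_ext' {a b : ℕ} {f : Fin a → ℝ} {g : Fin b → ℝ} (h : a = b)
    (hfg : ∀ i : Fin a, f i = g (Fin.cast h i)) :
    (⟨a, f⟩ : Σ n : ℕ, Fin n → ℝ) = ⟨b, g⟩ := by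
  subst h
  simp only [Fin.cast_refl, id] at hfg
  exact congrArg _ (funext hfg)

lemma mkron_cast' {m n : ℕ} (A : Matrix (Fin m) (Fin n) ℝ) {s s' : ℕ} (hs : s = s')
    (i : Fin (m * s)) (j : Fin (n * s)) :
    mkron A s i j = mkron A s' (Fin.cast (by rw [hs]) i) (Fin.cast (by rw [hs]) j) := by
  subst hs; rfl

lemma vkron_cast' {r : ℕ} (x : Fin r → ℝ) {s s' : ℕ} (hs : s = s') (i : Fin (r * s)) :
    vkron x s i = vkron x s' (Fin.cast (by rw [hs]) i) := by
  subst hs; rfl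

lemma B_row' {r μ : ℕ} (x : Fin r → ℝ) (p : Fin (r * μ)) :
    ∑ q : Fin (r * 1), ((Matrix.reindex finProdFinEquiv finProdFinEquiv)
        (Matrix.kroneckerMap (· * ·) (1 : Matrix (Fin r) (Fin r) ℝ)
          (Matrix.of fun (_ : Fin μ) (_ : Fin 1) => (1 : ℝ)))) p q * x (Fin.cast (mul_one r) q)
      = vkron x μ p := by
  rw [← Equiv.sum_comp (finProdFinEquiv (m := r) (n := 1))]
  have hc : ∀ (a : Fin r) (b : Fin 1), Fin.cast (mul_one r) (finProdFinEquiv (a, b)) = a := by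
    intro a b
    apply Fin.ext
    simp [finProdFinEquiv, Fin.val_eq_zero b]
  simp [Fintype.sum_prod_type, Matrix.one_apply, hc, vkron, ite_mul, Finset.sum_ite_eq]

lemma vkron_val {r s : ℕ} (x : Fin r → ℝ) (i : Fin (r * s)) (j : Fin (r * s))
    (h : (i : ℕ) = (j : ℕ)) : vkron x s i = vkron x s j := by
  congr 1; exact Fin.ext h

/-- on an `A`-invariant space `R^r`, the V-product action of
`A ∈ M_{k×kμ}` is given by the square matrix `A_r = (A ⊗ I_{r/k})(I_r ⊗ 1_μ)`. -/
theorem vprod_restrict {k μ r : ℕ} (hk : 0 < k) (hμ : 0 < μ) (hr : 0 < r)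
    (hinv : r = Nat.lcm r (k * μ) / μ) (A : Matrix (Fin k) (Fin (k * μ)) ℝ) :
    ∀ x : Fin r → ℝ,
      (⟨_, vprod A x⟩ : Σ a : ℕ, Fin a → ℝ)
        = ⟨k * (r / k),
            (mkron A (r / k) *
              (Matrix.reindex finProdFinEquiv finProdFinEquiv
                (Matrix.kroneckerMap (· * ·) (1 : Matrix (Fin r) (Fin r) ℝ)
                  (Matrix.of fun (_ : Fin μ) (_ : Fin 1) => (1 : ℝ)))).submatrix
                (Fin.cast (show k * μ * (r / k) = r * μ by
                  have h1 : μ ∣ Nat.lcm r (k * μ) :=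
                    dvd_trans (dvd_mul_left μ k) (Nat.dvd_lcm_right r (k * μ))
                  have h2 : r * μ = Nat.lcm r (k * μ) := by
                    nth_rewrite 1 [hinv]; exact Nat.div_mul_cancel h1
                  have h3 : k * μ ∣ r * μ := by
                    rw [h2]; exact Nat.dvd_lcm_right r (k * μ)
                  have h4 : k ∣ r := (Nat.mul_dvd_mul_iff_right hμ).mp h3
                  calc k * μ * (r / k) = k * (r / k) * μ := by ring
                    _ = r * μ := by rw [Nat.mul_div_cancel' h4]))
                id).mulVec (fun j => x (Fin.cast (mul_one r) j))⟩ := by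
  intro x
  have h1 : μ ∣ Nat.lcm r (k * μ) :=
    dvd_trans (dvd_mul_left μ k) (Nat.dvd_lcm_right r (k * μ))
  have h2 : r * μ = Nat.lcm r (k * μ) := by
    nth_rewrite 1 [hinv]; exact Nat.div_mul_cancel h1
  have h3 : k * μ ∣ r * μ := by rw [h2]; exact Nat.dvd_lcm_right r (k * μ)
  have h4 : k ∣ r := (Nat.mul_dvd_mul_iff_right hμ).mp h3
  have hlcm : Nat.lcm (k * μ) r = r * μ := by rw [Nat.lcm_comm, ← h2]
  have hs : Nat.lcm (k * μ) r / (k * μ) = r / k := by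
    rw [hlcm, Nat.mul_div_mul_right _ _ hμ]
  have ht : Nat.lcm (k * μ) r / r = μ := by
    rw [hlcm, Nat.mul_div_cancel_left _ hr]
  have e : k * (Nat.lcm (k * μ) r / (k * μ)) = k * (r / k) := by rw [hs]
  refine sigma_ext' e ?_
  intro i
  rw [← Matrix.mulVec_mulVec]
  show (mkron A _).mulVec _ i = (mkron A (r / k)).mulVec _ (Fin.cast e i)
  simp only [Matrix.mulVec, dotProduct]
  simp only [Matrix.submatrix_apply, id, B_row']
  have dims : k * μ * ((k * μ).lcm r / (k * μ)) = k * μ * (r / k) := by rw [hs]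
  refine Fintype.sum_equiv (finCongr dims) _ _ ?_
  intro j
  rw [mkron_cast' A hs i j, vkron_cast' x ht]
  rfl
end
end
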